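/- Let R be an equivalence relation with the relaxed square property on the edge set of a connected graph G. Then every vertex of G is incident to at least one edge of each equivalence class of R, and hence the number of equivalence classes of R is at most the minimum degree of G. -/

import Mathlib

open SimpleGraph

variable {V : Type*}

/-- An equivalence relation on a set `E` of edges: reflexive on `E`, symmetric, transitive,
and only relating elements of `E`. -/
structure IsEquivOn (R : Sym2 V → Sym2 V → Prop) (E : Set (Sym2 V)) : Prop where
  refl : ∀ e ∈ E, R e e
  symm : ∀ {e f}, R e f → R f e
  trans : ∀ {e f g}, R e f → R f g → R e g
  mem_left : ∀ {e f}, R e f → e ∈ E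
  mem_right : ∀ {e f}, R e f → f ∈ E

/-- `R` is an RSP-relation on `G`: an equivalence relation on `E(G)` such that any two adjacent
edges in distinct classes span a square (4-cycle) with opposite edges in the same class. -/
def IsRSP (G : SimpleGraph V) (R : Sym2 V → Sym2 V → Prop) : Prop :=
  IsEquivOn R G.edgeSet ∧
  ∀ x y z : V, G.Adj x y → G.Adj x z → y ≠ z → ¬ R s(x, y) s(x, z) →
    ∃ w : V, w ≠ x ∧ w ≠ y ∧ w ≠ z ∧ G.Adj y w ∧ G.Adj z w ∧
      R s(x, y) s(z, w) ∧ R s(x, z) s(y, w)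

/-- A finest RSP-relation: an RSP-relation such that every finer RSP-relation coincides
with it. -/
def IsFinestRSP (G : SimpleGraph V) (R : Sym2 V → Sym2 V → Prop) : Prop :=
  IsRSP G R ∧ ∀ S : Sym2 V → Sym2 V → Prop, IsRSP G S →
    (∀ e f, S e f → R e f) → (∀ e f, R e f → S e f)

/-- Every vertex of a connected graph with an RSP-relation `R` is incident to at least one
edge of each `R`-class, hence the number of `R`-classes is at most the minimum degree. -/
lemma rsp_step {G : SimpleGraph V} {R : Sym2 V → Sym2 V → Prop} (hR : IsRSP G R)
    {e : Sym2 V} {v u : V} (hvu : G.Adj v u)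
    (h : ∃ f ∈ G.edgeSet, R e f ∧ v ∈ f) : ∃ f ∈ G.edgeSet, R e f ∧ u ∈ f := by
  obtain ⟨f, hfE, hef, hvf⟩ := h
  obtain ⟨w, rfl⟩ := Sym2.mem_iff_exists.mp hvf
  have hvw : G.Adj v w := hfE
  by_cases huw : u = w
  · exact ⟨s(v, w), hfE, hef, by simp [huw]⟩
  by_cases hRuw : R s(v, u) s(v, w)
  · exact ⟨s(v, u), hvu, hR.1.trans hef (hR.1.symm hRuw), by simp⟩
  · obtain ⟨w', _, _, _, huw', hww', h1, h2⟩ := hR.2 v u w hvu hvw huw hRuw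
    exact ⟨s(u, w'), huw', hR.1.trans hef h2, by simp⟩

theorem stmt0 [Fintype V] (G : SimpleGraph V) [DecidableRel G.Adj]
    (hG : G.Connected) (R : Sym2 V → Sym2 V → Prop) (hR : IsRSP G R) :
    (∀ (v : V) (e : Sym2 V), e ∈ G.edgeSet → ∃ f ∈ G.edgeSet, R e f ∧ v ∈ f) ∧
    (∀ v : V,
      ({C : Set (Sym2 V) | ∃ e ∈ G.edgeSet, C = {f | R e f}}).ncard ≤ G.degree v) := by
  classical
  have key : ∀ (v : V) (e : Sym2 V), e ∈ G.edgeSet → ∃ f ∈ G.edgeSet, R e f ∧ v ∈ f := by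
    intro v e heE
    induction e with
    | _ a b =>
      have step : ∀ {x y : V} (_ : G.Walk x y),
          (∃ f ∈ G.edgeSet, R s(a,b) f ∧ x ∈ f) → ∃ f ∈ G.edgeSet, R s(a,b) f ∧ y ∈ f := by
        intro x y p
        induction p with
        | nil => exact id
        | cons h p ih => exact fun hx => ih (rsp_step hR h hx)
      obtain ⟨p⟩ := hG a v
      exact step p ⟨s(a,b), heE, hR.1.refl _ heE, by simp⟩
  refine ⟨key, fun v => ?_⟩
  have := Set.ncard_le_ncard_of_injOn
    (f := fun C : Set (Sym2 V) =>
      if h : ∃ f, f ∈ G.edgeSet ∧ f ∈ C ∧ v ∈ f then h.choose else s(v, v))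
    (s := {C : Set (Sym2 V) | ∃ e ∈ G.edgeSet, C = {f | R e f}})
    (t := G.incidenceSet v) ?_ ?_ (Set.toFinite _)
  · rw [Set.ncard_eq_toFinset_card' (G.incidenceSet v)] at this
    exact this.trans_eq (by rw [Set.toFinset_card]; convert card_incidenceSet_eq_degree G v)
  · rintro C ⟨e, heE, rfl⟩
    obtain ⟨f, hfE, hef, hvf⟩ := key v e heE
    have hex : ∃ f, f ∈ G.edgeSet ∧ f ∈ {f | R e f} ∧ v ∈ f := ⟨f, hfE, hef, hvf⟩
    simp only [dif_pos hex]
    exact ⟨hex.choose_spec.1, hex.choose_spec.2.2⟩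
  · rintro C ⟨e1, he1, rfl⟩ D ⟨e2, he2, rfl⟩ hfeq
    have hex1 : ∃ f, f ∈ G.edgeSet ∧ f ∈ {f | R e1 f} ∧ v ∈ f := by
      obtain ⟨f, hfE, hef, hvf⟩ := key v e1 he1; exact ⟨f, hfE, hef, hvf⟩
    have hex2 : ∃ f, f ∈ G.edgeSet ∧ f ∈ {f | R e2 f} ∧ v ∈ f := by
      obtain ⟨f, hfE, hef, hvf⟩ := key v e2 he2; exact ⟨f, hfE, hef, hvf⟩
    simp only [dif_pos hex1, dif_pos hex2] at hfeq
    have h1 : R e1 hex1.choose := hex1.choose_spec.2.1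
    have h2 : R e2 hex1.choose := hfeq ▸ hex2.choose_spec.2.1
    have h12 : R e1 e2 := hR.1.trans h1 (hR.1.symm h2)
    ext g
    exact ⟨fun hg => hR.1.trans (hR.1.symm h12) hg, fun hg => hR.1.trans h12 hg⟩
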